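/- arXiv:2508.12010 — 2 statements merged into one kernel-verified Lean document; each statement's English description precedes it below -/
import Mathlib

section
/- Let W := {w ∈ ℝ^n : G_w w ≤ g_w} and AB₀ := {θ ∈ ℝ^{n(n+m)} : G_{AB,0} θ ≤ g_{AB,0}} be polytopes, and let x₀,…,x_k ∈ ℝ^n, u₀,…,u_{k−1} ∈ ℝ^m be observed data. Define AB_i := AB_{i−1} ∩ Δ(x_{i−1}, u_{i−1}, x_i) for i = 1,…,k, where Δ(x,u,x⁺) := {θ : −([x;u]ᵀ ⊗ G_w) θ ≤ g_w − G_w x⁺}. Let A_nom ∈ ℝ^{n×n}, B_nom ∈ ℝ^{n×m} with vec([A_nom B_nom]) ∈ AB₀. If vec([A_nom B_nom]) ∉ AB_k (in particular if AB_k = ∅), then there exists an index i ∈ {0,…,k−1} such that x_{i+1} − A_nom x_i − B_nom u_i ∉ W; i.e., the observed data cannot be explained by the nominal model with any admissible disturbance sequence, so a fault must have occurred. -/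
open Matrix

/-- Column-wise vectorization of the horizontal concatenation `[A B]`. -/
def vecAB {n m : ℕ} (A : Matrix (Fin n) (Fin n) ℝ) (B : Matrix (Fin n) (Fin m) ℝ) :
    ((Fin n ⊕ Fin m) × Fin n) → ℝ :=
  fun p => Sum.elim (A p.2) (B p.2) p.1

/-- Kronecker product `[x; u]ᵀ ⊗ G_w`. -/
def xuKron {q n m : ℕ} (x : Fin n → ℝ) (u : Fin m → ℝ)
    (Gw : Matrix (Fin q) (Fin n) ℝ) :
    Matrix (Unit × Fin q) ((Fin n ⊕ Fin m) × Fin n) ℝ :=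
  Matrix.kroneckerMap (· * ·) (Matrix.of fun (_ : Unit) j => Sum.elim x u j) Gw

/-- The set `Δ(x, u, x⁺)` of parameters consistent with the data triple. -/
def Delta {q n m : ℕ} (Gw : Matrix (Fin q) (Fin n) ℝ) (gw : Fin q → ℝ)
    (x : Fin n → ℝ) (u : Fin m → ℝ) (xplus : Fin n → ℝ) :
    Set (((Fin n ⊕ Fin m) × Fin n) → ℝ) :=
  {θ | ∀ p : Unit × Fin q,
    (-(xuKron x u Gw)).mulVec θ p ≤ (gw - Gw.mulVec xplus) p.2}


lemma xuKron_key {q n m : ℕ} (Gw : Matrix (Fin q) (Fin n) ℝ) (x : Fin n → ℝ) (u : Fin m → ℝ)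
    (A : Matrix (Fin n) (Fin n) ℝ) (B : Matrix (Fin n) (Fin m) ℝ) (j : Fin q) :
    (xuKron x u Gw).mulVec (vecAB A B) ((), j)
      = Gw.mulVec (A.mulVec x + B.mulVec u) j := by
  simp only [xuKron, vecAB, Matrix.mulVec, dotProduct, Matrix.kroneckerMap, Matrix.of_apply,
    Fintype.sum_prod_type, Fintype.sum_sum_type, Sum.elim_inl, Sum.elim_inr, Pi.add_apply,
    Finset.mul_sum, Finset.sum_add_distrib]
  rw [Finset.sum_comm, Finset.sum_comm (γ := Fin m)]
  simp only [mul_add, Finset.mul_sum, Finset.sum_add_distrib]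
  congr 1 <;> exact Finset.sum_congr rfl fun r _ => Finset.sum_congr rfl fun a _ => by ring

/-- Soundness of the set-membership fault detection rule: if the nominal
parameter vector leaves `AB_k`, then at some observed transition the
residual `x_{i+1} − A_nom x_i − B_nom u_i` lies outside `W`, i.e., the
data cannot be explained by the nominal model with admissible disturbances. -/
theorem smi_fault_detection_sound {q n m s : ℕ}
    (Gw : Matrix (Fin q) (Fin n) ℝ) (gw : Fin q → ℝ)
    (GAB0 : Matrix (Fin s) ((Fin n ⊕ Fin m) × Fin n) ℝ)
    (gAB0 : Fin s → ℝ)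
    (k : ℕ) (x : ℕ → Fin n → ℝ) (u : ℕ → Fin m → ℝ)
    (Anom : Matrix (Fin n) (Fin n) ℝ) (Bnom : Matrix (Fin n) (Fin m) ℝ)
    (hnom : vecAB Anom Bnom ∈
      {θ : ((Fin n ⊕ Fin m) × Fin n) → ℝ | ∀ j, GAB0.mulVec θ j ≤ gAB0 j})
    (AB : ℕ → Set (((Fin n ⊕ Fin m) × Fin n) → ℝ))
    (hAB0 : AB 0 =
      {θ : ((Fin n ⊕ Fin m) × Fin n) → ℝ | ∀ j, GAB0.mulVec θ j ≤ gAB0 j})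
    (hABstep : ∀ i < k, AB (i + 1) = AB i ∩ Delta Gw gw (x i) (u i) (x (i + 1)))
    (hdetect : vecAB Anom Bnom ∉ AB k) :
    ∃ i < k, (x (i + 1) - Anom.mulVec (x i) - Bnom.mulVec (u i)) ∉
      {v : Fin n → ℝ | ∀ j, Gw.mulVec v j ≤ gw j} := by
  by_contra hcon
  push_neg at hcon
  apply hdetect
  have main : ∀ i, i ≤ k → vecAB Anom Bnom ∈ AB i := by
    intro i
    induction i with
    | zero => intro _; rw [hAB0]; exact hnom
    | succ i ih =>
      intro hik
      rw [hABstep i (by omega)]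
      refine ⟨ih (by omega), ?_⟩
      intro p
      obtain ⟨⟨⟩, j⟩ := p
      have hr := hcon i (by omega) j
      rw [Matrix.mulVec_sub, Matrix.mulVec_sub] at hr
      simp only [Matrix.neg_mulVec, Pi.neg_apply, Pi.sub_apply, xuKron_key]
      simp only [Matrix.mulVec_add, Pi.add_apply, Pi.sub_apply] at hr ⊢
      linarith
  exact main k le_rfl
end

section
/- Let C_w ∈ ℝ^{N×N} be symmetric positive definite, Z ∈ ℝ^{N×p} with P := Zᵀ C_w⁻¹ Z invertible, r ∈ ℝ^N, c := P⁻¹ Zᵀ C_w⁻¹ r, and α := rᵀ (C_w⁻¹ − C_w⁻¹ Z P⁻¹ Zᵀ C_w⁻¹) r. If α < 1, then every θ ∈ ℝ^p satisfying (r − Zθ)ᵀ C_w⁻¹ (r − Zθ) ≤ 1 also satisfies (θ − c)ᵀ (P / (1 − α)) (θ − c) ≤ 1; that is, the set of parameters consistent with the data lies inside the ellipsoid with center c and inverse shape matrix C⁻¹ = P/(1 − α). -/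
open Matrix

private lemma dotmv_aux {m n : Type*} [Fintype m] [Fintype n]
    (A : Matrix m n ℝ) (x : n → ℝ) (y : m → ℝ) :
    A.mulVec x ⬝ᵥ y = x ⬝ᵥ Aᵀ.mulVec y := by
  rw [dotProduct_comm, Matrix.dotProduct_mulVec, ← Matrix.mulVec_transpose, dotProduct_comm]

/-- Ellipsoidal outer bound on the consistent parameter set: with
`P := Zᵀ C_w⁻¹ Z` invertible, `c := P⁻¹ Zᵀ C_w⁻¹ r`,
`α := rᵀ (C_w⁻¹ − C_w⁻¹ Z P⁻¹ Zᵀ C_w⁻¹) r` and `α < 1`, every `θ` with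
`(r − Zθ)ᵀ C_w⁻¹ (r − Zθ) ≤ 1` satisfies
`(θ − c)ᵀ (P/(1 − α)) (θ − c) ≤ 1`. -/
theorem consistent_params_in_ellipsoid {N p : ℕ}
    (Cw : Matrix (Fin N) (Fin N) ℝ) (hCw : Cw.PosDef)
    (Z : Matrix (Fin N) (Fin p) ℝ)
    [Invertible (Zᵀ * Cw⁻¹ * Z)]
    (r : Fin N → ℝ)
    (c : Fin p → ℝ) (hc : c = ((Zᵀ * Cw⁻¹ * Z)⁻¹ * Zᵀ * Cw⁻¹).mulVec r)
    (α : ℝ)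
    (hα : α = r ⬝ᵥ ((Cw⁻¹ - Cw⁻¹ * Z * (Zᵀ * Cw⁻¹ * Z)⁻¹ * Zᵀ * Cw⁻¹).mulVec r))
    (hα1 : α < 1) :
    ∀ θ : Fin p → ℝ,
      (r - Z.mulVec θ) ⬝ᵥ (Cw⁻¹.mulVec (r - Z.mulVec θ)) ≤ 1 →
      (θ - c) ⬝ᵥ (((1 - α)⁻¹ • (Zᵀ * Cw⁻¹ * Z)).mulVec (θ - c)) ≤ 1 := by
  intro θ hθ
  have hMsymm : (Cw⁻¹)ᵀ = Cw⁻¹ := by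
    rw [Matrix.transpose_nonsing_inv]
    congr 1
    simpa using hCw.isHermitian.eq
  set M := Cw⁻¹ with hM
  set P := Zᵀ * M * Z with hP
  have hPsymm : Pᵀ = P := by
    rw [hP]
    simp only [Matrix.transpose_mul, Matrix.transpose_transpose, hMsymm, Matrix.mul_assoc]
  have hPinvsymm : (P⁻¹)ᵀ = P⁻¹ := by
    rw [Matrix.transpose_nonsing_inv, hPsymm]
  set s := (Zᵀ * M).mulVec r with hs
  -- P c = s
  have hPc : P.mulVec c = s := by
    rw [hc, Matrix.mulVec_mulVec, hs, ← Matrix.mul_assoc, ← Matrix.mul_assoc,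
      Matrix.mul_inv_of_invertible, Matrix.one_mul]
  -- cross term
  have hcross : (Z.mulVec θ) ⬝ᵥ M.mulVec r = θ ⬝ᵥ s := by
    rw [dotmv_aux, Matrix.mulVec_mulVec, hs]
  have hcross' : r ⬝ᵥ M.mulVec (Z.mulVec θ) = θ ⬝ᵥ s := by
    rw [Matrix.mulVec_mulVec, Matrix.dotProduct_mulVec, ← Matrix.mulVec_transpose,
      Matrix.transpose_mul, hMsymm]
    exact dotProduct_comm _ _
  -- quadratic term
  have hquad : (Z.mulVec θ) ⬝ᵥ M.mulVec (Z.mulVec θ) = θ ⬝ᵥ P.mulVec θ := by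
    rw [dotmv_aux, Matrix.mulVec_mulVec, Matrix.mulVec_mulVec, hP, Matrix.mul_assoc]
  -- α = rᵀ M r - c ⬝ᵥ s
  have hαeq : α = r ⬝ᵥ M.mulVec r - c ⬝ᵥ s := by
    rw [hα, Matrix.sub_mulVec, dotProduct_sub]
    congr 1
    have : M * Z * P⁻¹ * Zᵀ * M = (M * Z * P⁻¹) * (Zᵀ * M) := by
      rw [Matrix.mul_assoc, Matrix.mul_assoc, Matrix.mul_assoc]
    rw [this, ← Matrix.mulVec_mulVec, ← hs, Matrix.dotProduct_mulVec,
      ← Matrix.mulVec_transpose, Matrix.transpose_mul, Matrix.transpose_mul,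
      hMsymm, hPinvsymm, hc, ← Matrix.mul_assoc]
  -- expand hypothesis
  have hθ' : r ⬝ᵥ M.mulVec r - 2 * (θ ⬝ᵥ s) + θ ⬝ᵥ P.mulVec θ ≤ 1 := by
    have := hθ
    rw [Matrix.mulVec_sub, dotProduct_sub, sub_dotProduct, sub_dotProduct,
      hcross, hcross', hquad] at this
    linarith
  -- expand the ellipsoid quadratic form
  have hQ : (θ - c) ⬝ᵥ P.mulVec (θ - c)
      = θ ⬝ᵥ P.mulVec θ - 2 * (θ ⬝ᵥ s) + c ⬝ᵥ s := by
    have h1 : θ ⬝ᵥ P.mulVec c = θ ⬝ᵥ s := by rw [hPc]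
    have h2 : c ⬝ᵥ P.mulVec θ = θ ⬝ᵥ s := by
      rw [Matrix.dotProduct_mulVec, ← Matrix.mulVec_transpose, hPsymm, hPc, dotProduct_comm]
    rw [Matrix.mulVec_sub, dotProduct_sub, sub_dotProduct, sub_dotProduct, h1, h2, hPc]
    ring
  -- conclude
  have h1α : (0 : ℝ) < 1 - α := by linarith
  have hQle : (θ - c) ⬝ᵥ P.mulVec (θ - c) ≤ 1 - α := by
    rw [hQ]
    linarith [hθ', hαeq]
  calc (θ - c) ⬝ᵥ (((1 - α)⁻¹ • P).mulVec (θ - c))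
      = (1 - α)⁻¹ * ((θ - c) ⬝ᵥ P.mulVec (θ - c)) := by
        rw [Matrix.smul_mulVec, dotProduct_smul, smul_eq_mul]
    _ ≤ 1 := by
        rw [show (1 - α)⁻¹ * ((θ - c) ⬝ᵥ P.mulVec (θ - c))
            = ((θ - c) ⬝ᵥ P.mulVec (θ - c)) / (1 - α) by ring, div_le_one h1α]
        exact hQle
end
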